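/- arXiv:2603.17649 — 3 statements merged into one kernel-verified Lean document; each statement's English description precedes it below -/
import Mathlib

section
/- Let q : V → k be an anisotropic quadratic form over a field k, and let s, t be independent indeterminates over k. Then over the rational function field K = k(s,t), the quadratic form q_K ⊕ s·q_K does not represent the element t. -/
open TensorProduct


open TensorProduct Polynomial Finset

namespace Stmt0Aux

variable {n : ℕ}

def symMul {A : Type*} [CommRing A] (c : Fin n → A) : Sym2 (Fin n) → A :=
  Sym2.lift ⟨fun i j => c i * c j, fun _ _ => mul_comm _ _⟩

@[simp] lemma symMul_mk {A : Type*} [CommRing A] (c : Fin n → A) (i j : Fin n) :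
    symMul c s(i, j) = c i * c j := rfl

def Phi {A : Type*} [CommRing A] (α : Fin n → A) (γ : Sym2 (Fin n) → A) (c : Fin n → A) : A :=
  (∑ i, c i ^ 2 * α i) +
    ∑ ij ∈ Finset.univ.sym2.filter (fun ij => ¬ ij.IsDiag), symMul c ij * γ ij

lemma map_Phi {A B : Type*} [CommRing A] [CommRing B] (f : A →+* B) (α : Fin n → A)
    (γ : Sym2 (Fin n) → A) (c : Fin n → A) :
    f (Phi α γ c) = Phi (f ∘ α) (f ∘ γ) (f ∘ c) := by
  simp only [Phi, map_add, map_sum, map_mul, map_pow]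
  congr 1
  refine Finset.sum_congr rfl fun ij _ => ?_
  induction ij using Sym2.ind with
  | _ i j => simp [symMul]

lemma Phi_smul {A : Type*} [CommRing A] (a : A) (α : Fin n → A) (γ : Sym2 (Fin n) → A)
    (c : Fin n → A) :
    Phi α γ (fun i => a * c i) = a ^ 2 * Phi α γ c := by
  simp only [Phi, mul_add, Finset.mul_sum]
  congr 1
  · exact Finset.sum_congr rfl fun i _ => by ring
  · refine Finset.sum_congr rfl fun ij _ => ?_
    induction ij using Sym2.ind with
    | _ i j => simp [symMul]; ring

lemma Phi_zero {A : Type*} [CommRing A] (α : Fin n → A) (γ : Sym2 (Fin n) → A)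
    (c : Fin n → A) (hc : ∀ i, c i = 0) : Phi α γ c = 0 := by
  have : c = fun i => (0:A) * c i := by funext i; simp [hc i]
  rw [this, Phi_smul]; ring

/-- Expansion of a quadratic map on a sum of scaled vectors in terms of `Phi`. -/
lemma quadratic_sum_smul {R M : Type*} [CommRing R] [AddCommGroup M] [Module R M]
    (Q : QuadraticMap R M R) (v : Fin n → M) (c : Fin n → R) (α : Fin n → R)
    (γ : Sym2 (Fin n) → R) (hα : ∀ i, Q (v i) = α i)
    (hγ : ∀ i j, QuadraticMap.polar Q (v i) (v j) = γ s(i, j)) :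
    Q (∑ i, c i • v i) = Phi α γ c := by
  classical
  rw [QuadraticMap.map_sum]
  unfold Phi
  congr 1
  · refine Finset.sum_congr rfl fun i _ => ?_
    rw [QuadraticMap.map_smul, smul_eq_mul, ← hα i, sq]
  · refine Finset.sum_congr rfl fun ij _ => ?_
    induction ij using Sym2.ind with
    | _ i j =>
      rw [Sym2.map_mk, QuadraticMap.polarSym2_sym2Mk, symMul_mk]
      show QuadraticMap.polar Q (c i • v i) (c j • v j) = c i * c j * γ s(i, j)
      rw [QuadraticMap.polar_smul_left, QuadraticMap.polar_smul_right,
        smul_eq_mul, smul_eq_mul, ← hγ i j]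
      ring

variable {k : Type} [Field k]

def Aniso (α : Fin n → k) (γ : Sym2 (Fin n) → k) : Prop :=
  ∀ c : Fin n → k, Phi α γ c = 0 → ∀ i, c i = 0

lemma coeff_Phi (α : Fin n → k) (γ : Sym2 (Fin n) → k) (m : ℕ) (c : Fin n → k[X])
    (h : ∀ i, (c i).natDegree ≤ m) :
    (Phi (fun i => C (α i)) (fun ij => C (γ ij)) c).coeff (m + m)
      = Phi α γ (fun i => (c i).coeff m) := by
  simp only [Phi, coeff_add, finset_sum_coeff]
  congr 1
  · refine Finset.sum_congr rfl fun i _ => ?_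
    rw [coeff_mul_C, sq, sq, coeff_mul_add_eq_of_natDegree_le (h i) (h i)]
  · refine Finset.sum_congr rfl fun ij _ => ?_
    induction ij using Sym2.ind with
    | _ i j =>
      simp only [symMul_mk]
      rw [coeff_mul_C, coeff_mul_add_eq_of_natDegree_le (h i) (h j)]

lemma natDegree_Phi_le (α : Fin n → k) (γ : Sym2 (Fin n) → k) (m : ℕ) (c : Fin n → k[X])
    (h : ∀ i, (c i).natDegree ≤ m) :
    (Phi (fun i => C (α i)) (fun ij => C (γ ij)) c).natDegree ≤ m + m := by
  refine natDegree_add_le_of_degree_le (natDegree_sum_le_of_forall_le _ _ fun i _ => ?_)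
    (natDegree_sum_le_of_forall_le _ _ fun ij _ => ?_)
  · calc ((c i) ^ 2 * C (α i)).natDegree ≤ ((c i) ^ 2).natDegree + (C (α i)).natDegree :=
        natDegree_mul_le
    _ ≤ m + m := by
        rw [natDegree_C, add_zero, sq]
        exact le_trans natDegree_mul_le (add_le_add (h i) (h i))
  · induction ij using Sym2.ind with
    | _ i j =>
      simp only [symMul_mk]
      calc (c i * c j * C (γ s(i,j))).natDegree
          ≤ (c i * c j).natDegree + (C (γ s(i,j))).natDegree := natDegree_mul_le
        _ ≤ m + m := by
            rw [natDegree_C, add_zero]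
            exact le_trans natDegree_mul_le (add_le_add (h i) (h j))

/-- Over `k[X]`, if `Phi` is anisotropic over `k` then `Phi c ≠ 0` with even degree
whenever `c ≠ 0`. -/
lemma Phi_poly_ne_zero (α : Fin n → k) (γ : Sym2 (Fin n) → k) (hA : Aniso α γ)
    (c : Fin n → k[X]) (hc : ∃ i, c i ≠ 0) :
    Phi (fun i => C (α i)) (fun ij => C (γ ij)) c ≠ 0 ∧
      ∃ m, (Phi (fun i => C (α i)) (fun ij => C (γ ij)) c).natDegree = m + m := by
  classical
  set T : Finset (Fin n) := Finset.univ.filter (fun i => c i ≠ 0) with hT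
  have hTne : T.Nonempty := by
    obtain ⟨i, hi⟩ := hc
    exact ⟨i, by simp [hT, hi]⟩
  set m : ℕ := T.sup (fun i => (c i).natDegree) with hm
  obtain ⟨i0, hi0T, hi0⟩ := Finset.exists_mem_eq_sup T hTne (fun i => (c i).natDegree)
  have hi0ne : c i0 ≠ 0 := (Finset.mem_filter.mp hi0T).2
  have hdeg : ∀ i, (c i).natDegree ≤ m := by
    intro i
    by_cases h : c i = 0
    · simp [h]
    · exact Finset.le_sup (f := fun i => (c i).natDegree)
        (Finset.mem_filter.mpr ⟨Finset.mem_univ i, h⟩)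
  have hcoeff : (Phi (fun i => C (α i)) (fun ij => C (γ ij)) c).coeff (m + m)
      = Phi α γ (fun i => (c i).coeff m) := coeff_Phi α γ m c hdeg
  have hne : Phi α γ (fun i => (c i).coeff m) ≠ 0 := by
    intro h0
    have := hA _ h0 i0
    rw [hm, hi0] at this
    exact hi0ne (leadingCoeff_eq_zero.mp this)
  have hPhine : Phi (fun i => C (α i)) (fun ij => C (γ ij)) c ≠ 0 := by
    intro h0
    rw [h0] at hcoeff
    exact hne (by simpa using hcoeff.symm)
  refine ⟨hPhine, m, le_antisymm (natDegree_Phi_le α γ m c hdeg) ?_⟩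
  exact le_natDegree_of_ne_zero (by rw [hcoeff]; exact hne)

lemma step_zero (α : Fin n → k) (γ : Sym2 (Fin n) → k) (hA : Aniso α γ)
    (P Q : Fin n → k[X])
    (heq : Phi (fun i => C (α i)) (fun ij => C (γ ij)) P
      + X * Phi (fun i => C (α i)) (fun ij => C (γ ij)) Q = 0) :
    (∀ i, P i = 0) ∧ (∀ i, Q i = 0) := by
  by_cases hP : ∀ i, P i = 0
  · have h1 : Phi (fun i => C (α i)) (fun ij => C (γ ij)) P = 0 := Phi_zero _ _ _ hP
    rw [h1, zero_add] at heq
    have h2 : Phi (fun i => C (α i)) (fun ij => C (γ ij)) Q = 0 :=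
      (mul_eq_zero.mp heq).resolve_left X_ne_zero
    refine ⟨hP, fun i => ?_⟩
    by_contra hQi
    exact (Phi_poly_ne_zero α γ hA Q ⟨i, hQi⟩).1 h2
  · push_neg at hP
    obtain ⟨hPne, mp, hmp⟩ := Phi_poly_ne_zero α γ hA P hP
    have hQ : ¬ ∀ i, Q i = 0 := by
      intro hQ
      rw [Phi_zero _ _ _ hQ, mul_zero, add_zero] at heq
      exact hPne heq
    push_neg at hQ
    obtain ⟨hQne, mq, hmq⟩ := Phi_poly_ne_zero α γ hA Q hQ
    have heq' : Phi (fun i => C (α i)) (fun ij => C (γ ij)) P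
        = -(X * Phi (fun i => C (α i)) (fun ij => C (γ ij)) Q) :=
      eq_neg_of_add_eq_zero_left heq
    have hd : mp + mp = 1 + (mq + mq) := by
      have := congrArg natDegree heq'
      rwa [natDegree_neg, natDegree_mul X_ne_zero hQne, natDegree_X, hmp, hmq] at this
    omega

lemma descent (α : Fin n → k) (γ : Sym2 (Fin n) → k) (hA : Aniso α γ) :
    ∀ m : ℕ, ∀ E : k[X][X], ∀ P Q : Fin n → k[X][X], E.natDegree < m →
      Phi (fun i => C (C (α i))) (fun ij => C (C (γ ij))) P
        + C X * Phi (fun i => C (C (α i))) (fun ij => C (C (γ ij))) Q = X * E ^ 2 →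
      E = 0 := by
  intro m
  induction m with
  | zero => intro E P Q hdeg; omega
  | succ m ih =>
    intro E P Q hdeg heq
    set φ : k[X][X] →+* k[X] := Polynomial.evalRingHom (0 : k[X]) with hφ
    have hφeq := congrArg φ heq
    rw [map_add, map_mul, map_mul, map_Phi, map_Phi] at hφeq
    have hα : ⇑φ ∘ (fun i => C (C (α i))) = fun i => C (α i) := funext fun i => by
      simp [hφ]
    have hγ : ⇑φ ∘ (fun ij => C (C (γ ij))) = fun ij => C (γ ij) := funext fun ij => by
      simp [hφ]
    rw [hα, hγ] at hφeq
    have hφCX : φ (C X) = X := by simp [hφ]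
    have hφX : φ X = 0 := by simp [hφ]
    rw [hφCX, hφX, zero_mul] at hφeq
    obtain ⟨hP0, hQ0⟩ := step_zero α γ hA _ _ hφeq
    have hdvdP : ∀ i, (X : k[X][X]) ∣ P i := fun i =>
      X_dvd_iff.mpr (by rw [coeff_zero_eq_eval_zero]; exact hP0 i)
    have hdvdQ : ∀ i, (X : k[X][X]) ∣ Q i := fun i =>
      X_dvd_iff.mpr (by rw [coeff_zero_eq_eval_zero]; exact hQ0 i)
    choose P' hP' using hdvdP
    choose Q' hQ' using hdvdQ
    have hPfun : P = fun i => X * P' i := funext hP'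
    have hQfun : Q = fun i => X * Q' i := funext hQ'
    rw [hPfun, hQfun, Phi_smul, Phi_smul] at heq
    set pp := Phi (fun i => C (C (α i))) (fun ij => C (C (γ ij))) P' with hpp
    set qq := Phi (fun i => C (C (α i))) (fun ij => C (C (γ ij))) Q' with hqq
    have h2 : X * (X * (pp + C X * qq)) = X * E ^ 2 := by linear_combination heq
    have h3 : X * (pp + C X * qq) = E ^ 2 := mul_left_cancel₀ X_ne_zero h2
    have hdvdE : (X : k[X][X]) ∣ E := Prime.dvd_of_dvd_pow prime_X ⟨_, h3.symm⟩
    obtain ⟨E', hE'⟩ := hdvdE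
    by_cases hE0 : E' = 0
    · rw [hE', hE0, mul_zero]
    · exfalso
      have h4 : X * (pp + C X * qq) = X * (X * E' ^ 2) := by
        rw [h3, hE']; ring
      have h5 : pp + C X * qq = X * E' ^ 2 := mul_left_cancel₀ X_ne_zero h4
      have hdeg' : E'.natDegree < m := by
        have : E.natDegree = 1 + E'.natDegree := by
          rw [hE', natDegree_mul X_ne_zero hE0, natDegree_X]
        omega
      exact hE0 (ih E' P' Q' hdeg' h5)

variable (k)

noncomputable def e1 : MvPolynomial (Fin 1) k ≃ₐ[k] k[X] :=
  (MvPolynomial.renameEquiv k ((Equiv.equivPUnit (Fin 1)) : Fin 1 ≃ PUnit.{1})).trans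
    (MvPolynomial.pUnitAlgEquiv k)

noncomputable def e2 : MvPolynomial (Fin 2) k ≃ₐ[k] k[X][X] :=
  (MvPolynomial.renameEquiv k (Equiv.swap 0 1)).trans
    ((MvPolynomial.finSuccEquiv k 1).trans (Polynomial.mapAlgEquiv (e1 k)))

lemma e2_X0 : e2 k (MvPolynomial.X 0) = C X := by
  have h1 : (MvPolynomial.X 1 : MvPolynomial (Fin 2) k) = MvPolynomial.X (Fin.succ 0) := rfl
  simp only [e2, AlgEquiv.trans_apply, MvPolynomial.renameEquiv_apply, MvPolynomial.rename_X,
    Equiv.swap_apply_left, h1, MvPolynomial.finSuccEquiv_X_succ, Polynomial.coe_mapAlgEquiv,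
    Polynomial.map_C]
  congr 1
  simp [e1, MvPolynomial.uniqueAlgEquiv_apply, MvPolynomial.eval₂_X]

lemma e2_X1 : e2 k (MvPolynomial.X 1) = X := by
  simp only [e2, AlgEquiv.trans_apply, MvPolynomial.renameEquiv_apply, MvPolynomial.rename_X,
    Equiv.swap_apply_right, MvPolynomial.finSuccEquiv_X_zero, Polynomial.coe_mapAlgEquiv,
    Polynomial.map_X]

end Stmt0Aux

namespace Stmt0Aux

theorem main_aux (k : Type) [Field k] {n : ℕ} (α : Fin n → k) (γ : Sym2 (Fin n) → k)
    (hAniso : Aniso α γ) (K : Type) [Field K] [Algebra (MvPolynomial (Fin 2) k) K]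
    [Algebra k K] [IsScalarTower k (MvPolynomial (Fin 2) k) K]
    [IsFractionRing (MvPolynomial (Fin 2) k) K] (cx cy : Fin n → K)
    (heq2 : Phi (fun i => algebraMap k K (α i)) (fun ij => algebraMap k K (γ ij)) cx
      + algebraMap (MvPolynomial (Fin 2) k) K (MvPolynomial.X 0)
          * Phi (fun i => algebraMap k K (α i)) (fun ij => algebraMap k K (γ ij)) cy
      = algebraMap (MvPolynomial (Fin 2) k) K (MvPolynomial.X 1)) : False := by
  classical
  set A2 := MvPolynomial (Fin 2) k
  set ιA : A2 →+* K := (algebraMap A2 K : A2 →+* K) with hιAdef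
  obtain ⟨d, hd⟩ := IsLocalization.exist_integer_multiples_of_finite
      (nonZeroDivisors A2) (Sum.elim cx cy)
  have hd' : ∀ i, ∃ a : A2, ιA a = ιA (d : A2) * Sum.elim cx cy i := by
    intro i; obtain ⟨a, ha⟩ := hd i; exact ⟨a, by rwa [Algebra.smul_def] at ha⟩
  choose g hg using hd'
  set P : Fin n → A2 := fun i => g (Sum.inl i) with hPdef
  set Qv : Fin n → A2 := fun i => g (Sum.inr i) with hQvdef
  set αA : Fin n → A2 := fun i => MvPolynomial.C (α i) with hαAdef
  set γA : Sym2 (Fin n) → A2 := fun ij => MvPolynomial.C (γ ij) with hγAdef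
  have hcompat : ∀ a : k, ιA (MvPolynomial.C a) = algebraMap k K a := fun a => by
    rw [hιAdef, IsScalarTower.algebraMap_apply k A2 K, MvPolynomial.algebraMap_eq]
  have hPhiP : ιA (Phi αA γA P)
      = ιA ((d : A2)) ^ 2 * Phi (fun i => algebraMap k K (α i))
          (fun ij => algebraMap k K (γ ij)) cx := by
    rw [map_Phi]
    have h1 : ⇑ιA ∘ αA = fun i => algebraMap k K (α i) := funext fun i => hcompat (α i)
    have h2 : ⇑ιA ∘ γA = fun ij => algebraMap k K (γ ij) := funext fun ij => hcompat (γ ij)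
    have h3 : ⇑ιA ∘ P = fun i => ιA (d : A2) * cx i := funext fun i => hg (Sum.inl i)
    rw [h1, h2, h3, Phi_smul]
  have hPhiQ : ιA (Phi αA γA Qv)
      = ιA ((d : A2)) ^ 2 * Phi (fun i => algebraMap k K (α i))
          (fun ij => algebraMap k K (γ ij)) cy := by
    rw [map_Phi]
    have h1 : ⇑ιA ∘ αA = fun i => algebraMap k K (α i) := funext fun i => hcompat (α i)
    have h2 : ⇑ιA ∘ γA = fun ij => algebraMap k K (γ ij) := funext fun ij => hcompat (γ ij)
    have h3 : ⇑ιA ∘ Qv = fun i => ιA (d : A2) * cy i := funext fun i => hg (Sum.inr i)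
    rw [h1, h2, h3, Phi_smul]
  have E2 : ιA (Phi αA γA P + MvPolynomial.X 0 * Phi αA γA Qv)
      = ιA (MvPolynomial.X 1 * (d : A2) ^ 2) := by
    rw [map_add, map_mul, map_mul, map_pow, hPhiP, hPhiQ]
    linear_combination (ιA ((d : A2))) ^ 2 * heq2
  have E3 : Phi αA γA P + MvPolynomial.X 0 * Phi αA γA Qv
      = MvPolynomial.X 1 * (d : A2) ^ 2 := IsFractionRing.injective A2 K E2
  -- transport to k[X][X]
  set ψ : A2 →+* Polynomial (Polynomial k) := (e2 k).toAlgHom.toRingHom with hψdef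
  have E4 := congrArg ψ E3
  rw [map_add, map_mul, map_mul, map_pow, map_Phi, map_Phi] at E4
  have hCC : ∀ a : k, ψ (MvPolynomial.C a) = C (C a) := fun a => by
    show (e2 k) (MvPolynomial.C a) = _
    rw [← MvPolynomial.algebraMap_eq, AlgEquiv.commutes]
    rw [Polynomial.algebraMap_apply, Polynomial.algebraMap_apply, Algebra.algebraMap_self,
      RingHom.id_apply]
  have hψα : ⇑ψ ∘ αA = fun i => C (C (α i)) := funext fun i => hCC (α i)
  have hψγ : ⇑ψ ∘ γA = fun ij => C (C (γ ij)) := funext fun ij => hCC (γ ij)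
  have hψX0 : ψ (MvPolynomial.X 0) = C X := e2_X0 k
  have hψX1 : ψ (MvPolynomial.X 1) = X := e2_X1 k
  rw [hψα, hψγ, hψX0, hψX1] at E4
  have hψd : ψ ((d : A2)) ≠ 0 := by
    intro h
    exact nonZeroDivisors.coe_ne_zero d
      ((e2 k).injective (h.trans (map_zero ψ).symm))
  exact hψd (descent α γ hAniso ((ψ ((d : A2))).natDegree + 1) _ _ _
    (Nat.lt_succ_self _) E4)

end Stmt0Aux


open Stmt0Aux

/-- if `q : V → k` is an anisotropic quadratic form over a field `k` and
`s, t` are independent indeterminates, then over `K = k(s,t)` the quadratic form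
`q_K ⊥ s·q_K` does not represent `t`.  Here `K` is realized as the fraction field of
`k[s,t]`, and the base change `q_K` of `q` to `K ⊗[k] V` is characterized by its values
`q_K(a ⊗ v) = a²·q(v)` on pure tensors together with its polar form. -/
theorem stmt_0 (k : Type) [Field k] (V : Type) [AddCommGroup V] [Module k V]
    [FiniteDimensional k V] (q : QuadraticForm k V) (hq : q.Anisotropic)
    (qK : QuadraticForm (FractionRing (MvPolynomial (Fin 2) k))
      ((FractionRing (MvPolynomial (Fin 2) k)) ⊗[k] V))
    (hqK : ∀ (a : FractionRing (MvPolynomial (Fin 2) k)) (v : V),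
      qK (a ⊗ₜ[k] v) = a ^ 2 * algebraMap k (FractionRing (MvPolynomial (Fin 2) k)) (q v))
    (hqKpolar : ∀ (a b : FractionRing (MvPolynomial (Fin 2) k)) (v w : V),
      QuadraticMap.polar qK (a ⊗ₜ[k] v) (b ⊗ₜ[k] w)
        = a * b * algebraMap k (FractionRing (MvPolynomial (Fin 2) k))
            (QuadraticMap.polar q v w)) :
    ¬ ∃ x y : (FractionRing (MvPolynomial (Fin 2) k)) ⊗[k] V,
        qK x + algebraMap (MvPolynomial (Fin 2) k) (FractionRing (MvPolynomial (Fin 2) k))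
            (MvPolynomial.X 0) * qK y
          = algebraMap (MvPolynomial (Fin 2) k) (FractionRing (MvPolynomial (Fin 2) k))
              (MvPolynomial.X 1) := by
  classical
  rintro ⟨x, y, heq⟩
  set n := Module.finrank k V with hndef
  set b : Module.Basis (Fin n) k V := Module.finBasis k V with hbdef
  set α : Fin n → k := fun i => q (b i) with hαdef
  set γ : Sym2 (Fin n) → k :=
    Sym2.lift ⟨fun i j => QuadraticMap.polar q (b i) (b j),
      fun i j => QuadraticMap.polar_comm q _ _⟩ with hγdef
  have hγmk : ∀ i j, QuadraticMap.polar q (b i) (b j) = γ s(i, j) := fun i j => rfl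
  have hAniso : Aniso α γ := by
    intro c hc i
    have hsum : q (∑ j, c j • b j) = Phi α γ c :=
      quadratic_sum_smul q (fun j => b j) c α γ (fun _ => rfl) hγmk
    have h0 : (∑ j, c j • b j) = 0 := hq _ (by rw [hsum]; exact hc)
    exact Fintype.linearIndependent_iff.mp b.linearIndependent c h0 i
  set bb : Module.Basis (Fin n) (FractionRing (MvPolynomial (Fin 2) k))
      ((FractionRing (MvPolynomial (Fin 2) k)) ⊗[k] V) :=
    b.baseChange (FractionRing (MvPolynomial (Fin 2) k)) with hbbdef
  have hval : ∀ z : (FractionRing (MvPolynomial (Fin 2) k)) ⊗[k] V,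
      qK z = Phi (fun i => algebraMap k (FractionRing (MvPolynomial (Fin 2) k)) (α i))
        (fun ij => algebraMap k (FractionRing (MvPolynomial (Fin 2) k)) (γ ij))
        (fun i => bb.repr z i) := by
    intro z
    have h1 : z = ∑ i, bb.repr z i • bb i := (bb.sum_repr z).symm
    conv_lhs => rw [h1]
    refine quadratic_sum_smul qK ⇑bb _ _ _ ?_ ?_
    · intro i
      rw [hbbdef, Module.Basis.baseChange_apply, hqK, one_pow, one_mul]
    · intro i j
      rw [hbbdef, Module.Basis.baseChange_apply, Module.Basis.baseChange_apply, hqKpolar, one_mul, one_mul,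
        hγmk i j]
  have heq2 := heq
  rw [hval x, hval y] at heq2
  exact main_aux k α γ hAniso (FractionRing (MvPolynomial (Fin 2) k))
    (fun i => bb.repr x i) (fun i => bb.repr y i) heq2
end

section
/- Let k be a field of characteristic 2. The Jordan algebra Her₃(k) of symmetric 3×3 matrices over k (with scalars on the diagonal) is homogeneous, i.e., all its isotopes Her₃(k,Γ) for diagonal Γ ∈ GL₃(k) are isomorphic to Her₃(k), if and only if k is perfect (k² = k). Concretely: for every γ ∈ k^×, there exists g ∈ GL₃(k) with g·diag(1,1,γ)·gᵀ a scalar multiple of the identity matrix, if and only if every element of k is a square. -/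
/-- over a field `k` of characteristic 2, the Jordan algebra `Her₃(k)` is
homogeneous iff `k` is perfect.  Concretely: every diagonal form `diag(1,1,γ)` (for
`γ ∈ k^×`) is congruent via some `g ∈ GL₃(k)` to a scalar matrix, iff every element of
`k` is a square. -/
theorem stmt_10 (k : Type) [Field k] [CharP k 2] :
    (∀ γ : kˣ, ∃ (g : Matrix.GeneralLinearGroup (Fin 3) k) (c : k),
        (g : Matrix (Fin 3) (Fin 3) k) * Matrix.diagonal ![1, 1, (γ : k)]
            * (g : Matrix (Fin 3) (Fin 3) k).transpose
          = c • (1 : Matrix (Fin 3) (Fin 3) k))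
      ↔ ∀ a : k, ∃ b : k, b ^ 2 = a := by
  have h2 : (2 : k) = 0 := CharTwo.two_eq_zero
  constructor
  · intro H a
    by_cases ha : a = 0
    · exact ⟨0, by simp [ha]⟩
    by_contra hcon
    push_neg at hcon
    obtain ⟨g, c, hgc⟩ := H (Units.mk0 a ha)
    set M : Matrix (Fin 3) (Fin 3) k := (g : Matrix (Fin 3) (Fin 3) k) with hM
    -- entrywise equations
    have key : ∀ i j, M i 0 * M j 0 + M i 1 * M j 1 + a * (M i 2 * M j 2)
        = if i = j then c else 0 := by
      intro i j
      have h := congrFun (congrFun hgc i) j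
      simp [Matrix.mul_apply, Matrix.transpose_apply, Matrix.diagonal_apply,
        Fin.sum_univ_three, Matrix.smul_apply, Matrix.one_apply, ← hM] at h
      split <;> rename_i hij
      · simp [hij] at h ⊢; linear_combination h
      · simp [hij] at h ⊢; linear_combination h
    -- c ≠ 0
    have hc : c ≠ 0 := by
      intro hc0
      have hu : IsUnit M.det := (Matrix.isUnit_iff_isUnit_det _).mp g.isUnit
      have hdet := congrArg Matrix.det hgc
      rw [Matrix.det_mul, Matrix.det_mul, Matrix.det_transpose, Matrix.det_smul,
        Matrix.det_one, Matrix.det_diagonal, Fin.prod_univ_three] at hdet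
      simp only [hc0, Matrix.cons_val_zero, Matrix.cons_val_one, Matrix.head_cons,
        Matrix.cons_val_two, Matrix.tail_cons, one_mul, mul_one, Fintype.card_fin,
        zero_pow, ne_eq, OfNat.ofNat_ne_zero, not_false_eq_true, ← hM,
        Units.val_mk0] at hdet
      exact (mul_ne_zero (mul_ne_zero hu.ne_zero ha) hu.ne_zero) hdet
    -- uniqueness of representation x² + a y²
    have uniq : ∀ x y x' y' : k, x ^ 2 + a * y ^ 2 = x' ^ 2 + a * y' ^ 2 →
        x = x' ∧ y = y' := by
      intro x y x' y' h
      have hsq : (x + x') ^ 2 = a * (y + y') ^ 2 := by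
        linear_combination h + (x * x' + x' ^ 2 - a * y ^ 2 - a * y * y') * h2
      by_cases hy : y = y'
      · subst hy
        have h0 : (x + x') ^ 2 = 0 := by
          rw [hsq, CharTwo.add_self_eq_zero]; ring
        have hx : x + x' = 0 := pow_eq_zero_iff (n := 2) (by norm_num) |>.mp h0
        exact ⟨sub_eq_zero.mp (by rw [CharTwo.sub_eq_add]; exact hx), rfl⟩
      · exfalso
        apply hcon ((x + x') / (y + y'))
        have hyy : y + y' ≠ 0 := fun h0 =>
          hy (sub_eq_zero.mp (by rw [CharTwo.sub_eq_add]; exact h0))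
        field_simp
        linear_combination hsq
    -- the diagonal equations as sums of squares
    have diag : ∀ i, (M i 0 + M i 1) ^ 2 + a * (M i 2) ^ 2 = c := by
      intro i
      have h := key i i
      rw [if_pos rfl] at h
      linear_combination h + (M i 0 * M i 1) * h2
    have u1 := uniq _ _ _ _ ((diag 1).trans (diag 0).symm)
    have u2 := uniq _ _ _ _ ((diag 2).trans (diag 0).symm)
    have hs : M 1 1 = M 0 0 + M 0 1 - M 1 0 := by linear_combination u1.1
    have hu2 : M 2 1 = M 0 0 + M 0 1 - M 2 0 := by linear_combination u2.1
    have E01 := key 0 1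
    have E02 := key 0 2
    have E12 := key 1 2
    rw [if_neg (by decide)] at E01 E02 E12
    rw [hs, u1.2] at E01
    rw [hu2, u2.2] at E02
    rw [hs, hu2, u1.2, u2.2] at E12
    have D0 := key 0 0
    rw [if_pos rfl] at D0
    apply hc
    linear_combination (-1 : k) * E01 - E02 + E12 + D0
      + (c + M 0 0 * M 1 0 + M 0 0 * M 2 0 - M 1 0 * M 2 0 - M 0 0 ^ 2) * h2
  · intro H γ
    obtain ⟨b, hb⟩ := H (γ : k)
    have hb0 : b ≠ 0 := by
      intro h0
      exact γ.ne_zero (by rw [← hb, h0]; ring)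
    refine ⟨⟨Matrix.diagonal ![1, 1, b⁻¹], Matrix.diagonal ![1, 1, b], ?_, ?_⟩, 1, ?_⟩
    · rw [Matrix.diagonal_mul_diagonal]
      convert Matrix.diagonal_one using 2
      funext i
      fin_cases i <;> simp [inv_mul_cancel₀ hb0]
    · rw [Matrix.diagonal_mul_diagonal]
      convert Matrix.diagonal_one using 2
      funext i
      fin_cases i <;> simp [mul_inv_cancel₀ hb0]
    · show Matrix.diagonal ![1, 1, b⁻¹] * Matrix.diagonal ![1, 1, (γ : k)]
          * (Matrix.diagonal ![1, 1, b⁻¹]).transpose = (1 : k) • 1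
      rw [Matrix.diagonal_transpose, Matrix.diagonal_mul_diagonal,
        Matrix.diagonal_mul_diagonal, one_smul]
      convert Matrix.diagonal_one using 2
      funext i
      fin_cases i <;> simp
      rw [← hb]
      field_simp
end

section
/- Let k be a field and W(k) its Witt ring with fundamental ideal I. Let q be a regular quadratic form over k representing 1. If I² ⊆ Ann_{W(k)}(q) (i.e., the Witt class of ⟨⟨γ,δ⟩⟩·q is zero for all γ,δ ∈ k^×), then for every γ ∈ k^×, the form ⟨⟨γ⟩⟩ ⊗ q = q ⊥ (-γ)q is universal, and conversely. -/
/-- The hyperbolic plane `(x, y) ↦ x * y` as a quadratic form on `k × k`. -/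
noncomputable def hyperbolicPlane (k : Type) [Field k] : QuadraticForm k (k × k) :=
  QuadraticMap.linMulLin (LinearMap.fst k k k) (LinearMap.snd k k k)

/-- A quadratic form is hyperbolic if it is equivalent to an orthogonal sum of
hyperbolic planes. -/
def IsHyperbolic {k V : Type} [Field k] [AddCommGroup V] [Module k V]
    (Q : QuadraticForm k V) : Prop :=
  ∃ n : ℕ, QuadraticMap.Equivalent Q (QuadraticMap.pi fun _ : Fin n => hyperbolicPlane k)

/-- `q` is an `n`-fold Pfister quadratic form: it is equivalent to
`⟨⟨a₁,…,aₙ⟩⟩ = ⟨1,-a₁⟩ ⊗ ⋯ ⊗ ⟨1,-aₙ⟩`, realized as the diagonal form whose entries are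
the products `∏_{i ∈ S} (-aᵢ)` over subsets `S ⊆ {1,…,n}`. -/
def IsPfister {k V : Type} [Field k] [AddCommGroup V] [Module k V] (n : ℕ)
    (q : QuadraticForm k V) : Prop :=
  ∃ a : Fin n → k, (∀ i, a i ≠ 0) ∧
    QuadraticMap.Equivalent q
      (QuadraticMap.weightedSumSquares k (fun S : Finset (Fin n) => ∏ i ∈ S, -(a i)))


open QuadraticMap

variable {k : Type} [Field k] {V V₁ V₂ : Type}
  [AddCommGroup V] [Module k V] [AddCommGroup V₁] [Module k V₁]
  [AddCommGroup V₂] [Module k V₂]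

/-- scaling an equivalence -/
lemma equiv_smul {Q₁ : QuadraticForm k V₁} {Q₂ : QuadraticForm k V₂} (c : k)
    (h : Q₁.Equivalent Q₂) : (c • Q₁).Equivalent (c • Q₂) := by
  obtain ⟨f⟩ := h
  exact ⟨{ f.toLinearEquiv with
    map_app' := fun m => by
      have := f.map_app m
      simp only [QuadraticMap.smul_apply]
      rw [← this]; rfl }⟩

lemma equiv_prod_comm (Q₁ : QuadraticForm k V₁) (Q₂ : QuadraticForm k V₂) :
    (Q₁.prod Q₂).Equivalent (Q₂.prod Q₁) :=
  ⟨{ LinearEquiv.prodComm k V₁ V₂ with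
     map_app' := fun m => by
       simp [QuadraticMap.prod_apply, add_comm] }⟩

lemma equiv_sq_smul (Q : QuadraticForm k V) {t : k} (ht : t ≠ 0) :
    ((t * t) • Q).Equivalent Q := by
  refine ⟨{ LinearEquiv.smulOfNeZero k V t ht with
    map_app' := fun m => ?_ }⟩
  show Q (t • m) = ((t*t) • Q) m
  rw [QuadraticMap.map_smul, QuadraticMap.smul_apply]

lemma smul_prod_eq (c : k) (Q₁ : QuadraticForm k V₁) (Q₂ : QuadraticForm k V₂) :
    c • (Q₁.prod Q₂) = (c • Q₁).prod (c • Q₂) := by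
  ext m
  simp [QuadraticMap.prod_apply, QuadraticMap.smul_apply, mul_add]

/-- The key "twist" equivalence: if `α + β = c ≠ 0` then
`⟨α,β⟩ ⊗ φ ≅ ⟨c, αβc⟩ ⊗ φ`. -/
lemma equiv_twist (φ : QuadraticForm k V) (α β : k) (h : α + β ≠ 0) :
    (((α + β) • φ).prod ((α * β * (α + β)) • φ)).Equivalent
      ((α • φ).prod (β • φ)) := by
  refine ⟨{
    toFun := fun p => (p.1 - β • p.2, p.1 + α • p.2)
    map_add' := fun p q => by
      ext <;> simp [smul_add] <;> abel
    map_smul' := fun t p => by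
      ext <;> simp [smul_sub, smul_add, smul_comm t]
    invFun := fun p => ((α + β)⁻¹ • (α • p.1 + β • p.2), (α + β)⁻¹ • (p.2 - p.1))
    left_inv := fun p => by
      ext <;> (match_scalars <;> field_simp <;> ring)
    right_inv := fun p => by
      ext <;> (match_scalars <;> field_simp <;> ring)
    map_app' := fun p => by
      show α • φ (p.1 - β • p.2) + β • φ (p.1 + α • p.2)
        = (α + β) • φ p.1 + (α * β * (α + β)) • φ p.2
      rw [sub_eq_add_neg, ← neg_smul]
      rw [QuadraticMap.map_add φ p.1 ((-β) • p.2),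
          QuadraticMap.map_add φ p.1 (α • p.2)]
      rw [QuadraticMap.map_smul, QuadraticMap.map_smul,
          polar_smul_right, polar_smul_right]
      simp only [smul_eq_mul]
      ring }⟩

/-- A quadratic form is round if every nonzero represented value is a similarity factor. -/
def Round (φ : QuadraticForm k V) : Prop :=
  ∀ c : k, c ≠ 0 → (∃ v, φ v = c) → (c • φ).Equivalent φ

lemma Round.of_equivalent {φ : QuadraticForm k V₁} {ψ : QuadraticForm k V₂}
    (h : φ.Equivalent ψ) (hψ : Round ψ) : Round φ := by
  intro c hc hrep
  obtain ⟨v, hv⟩ := hrep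
  obtain ⟨f⟩ := h
  have hv' : ψ (f v) = c := by rw [f.map_app]; exact hv
  exact ((equiv_smul c ⟨f⟩).trans (hψ c hc ⟨f v, hv'⟩)).trans (Equivalent.symm ⟨f⟩)

lemma Round.step {φ : QuadraticForm k V} (hφ : Round φ) {b : k} (hb : b ≠ 0) :
    Round (φ.prod ((-b) • φ)) := by
  intro c hc hrep
  obtain ⟨⟨u, v⟩, huv⟩ := hrep
  rw [QuadraticMap.prod_apply, QuadraticMap.smul_apply, smul_eq_mul] at huv
  set x := φ u with hx
  set y := φ v with hy
  rw [smul_prod_eq]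
  by_cases hy0 : y = 0
  · have hxc : x = c := by rw [hy0] at huv; simpa using huv
    have h1 : (c • φ).Equivalent φ := hφ c hc ⟨u, by rw [← hxc]⟩
    have h2 : (c • ((-b) • φ)).Equivalent ((-b) • φ) := by
      rw [smul_smul, mul_comm, ← smul_smul]
      exact equiv_smul (-b) h1
    exact h1.prod h2
  · by_cases hx0 : x = 0
    · have hcy : c = -b * y := by rw [hx0, zero_add] at huv; exact huv.symm
      have hyG : (y • φ).Equivalent φ := hφ y hy0 ⟨v, rfl⟩
      have e1 : (c • φ).Equivalent ((-b) • φ) := by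
        rw [hcy, ← smul_smul]
        exact equiv_smul (-b) hyG
      have e2 : (c • ((-b) • φ)).Equivalent φ := by
        rw [smul_smul, hcy, show -b * y * -b = b * b * y by ring, ← smul_smul]
        exact (equiv_smul (b*b) hyG).trans (equiv_sq_smul φ hb)
      exact (e1.prod e2).trans (equiv_prod_comm _ _)
    · have hxG : (x • φ).Equivalent φ := hφ x hx0 ⟨u, rfl⟩
      have hyG : (y • φ).Equivalent φ := hφ y hy0 ⟨v, rfl⟩
      have e1 : (φ.prod ((-b) • φ)).Equivalent ((x • φ).prod ((-b * y) • φ)) := by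
        refine Equivalent.prod hxG.symm ?_
        rw [← smul_smul]
        exact (equiv_smul (-b) hyG).symm
      have hsum : x + -b * y = c := huv
      have e2 := equiv_twist φ x (-b * y) (by rw [hsum]; exact hc)
      rw [hsum] at e2
      have e4 : ((x * (-b * y) * c) • φ).Equivalent ((c * -b) • φ) := by
        rw [show x * (-b * y) * c = (c * -b) * (x * y) by ring, ← smul_smul (c * -b) (x * y),
          ← smul_smul x y]
        exact equiv_smul _ ((equiv_smul x hyG).trans hxG)
      rw [smul_smul c (-b)]
      exact (((Equivalent.refl (c • φ)).prod e4.symm).trans e2).trans e1.symm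

lemma wSS_smul {ι : Type} [Fintype ι] (c : k) (w : ι → k) :
    c • QuadraticMap.weightedSumSquares k w
      = QuadraticMap.weightedSumSquares k (fun i => c * w i) := by
  ext v
  simp [QuadraticMap.weightedSumSquares_apply, Finset.mul_sum, mul_assoc]

/-- splitting a weighted sum of squares along a sum decomposition of the index type -/
lemma wSS_split {ι ι₁ ι₂ : Type} [Fintype ι] [Fintype ι₁] [Fintype ι₂]
    (w : ι → k) (e : ι ≃ ι₁ ⊕ ι₂) :
    (QuadraticMap.weightedSumSquares k w).Equivalent
      ((QuadraticMap.weightedSumSquares k (fun i => w (e.symm (Sum.inl i)))).prod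
        (QuadraticMap.weightedSumSquares k (fun i => w (e.symm (Sum.inr i))))) := by
  refine ⟨{
    toFun := fun v => (fun i => v (e.symm (Sum.inl i)), fun i => v (e.symm (Sum.inr i)))
    map_add' := fun v v' => rfl
    map_smul' := fun t v => rfl
    invFun := fun p => fun i => Sum.elim p.1 p.2 (e i)
    left_inv := fun v => by
      funext i
      have h2 := e.symm_apply_apply i
      rcases h : e i with j | j <;> rw [h] at h2 <;> simp [h, h2]
    right_inv := fun p => by
      ext i <;> simp
    map_app' := fun v => by
      simp only [QuadraticMap.prod_apply, QuadraticMap.weightedSumSquares_apply]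
      rw [← Fintype.sum_sum_type (fun s : ι₁ ⊕ ι₂ => w (e.symm s) • (v (e.symm s) * v (e.symm s)))]
      exact Equiv.sum_comp e.symm fun i => w i • (v i * v i) }⟩

/-- reindexing a constant pi quadratic form -/
lemma pi_reindex {ι ι' W : Type} [Fintype ι] [Fintype ι'] [AddCommGroup W] [Module k W]
    (e : ι' ≃ ι) (Φ : QuadraticForm k W) :
    (QuadraticMap.pi fun _ : ι => Φ).Equivalent (QuadraticMap.pi fun _ : ι' => Φ) := by
  refine ⟨{
    toFun := fun v => fun i' => v (e i')
    map_add' := fun v v' => rfl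
    map_smul' := fun t v => rfl
    invFun := fun v => fun i => v (e.symm i)
    left_inv := fun v => by funext i; simp
    right_inv := fun v => by funext i; simp
    map_app' := fun v => by
      simp only [QuadraticMap.pi_apply]
      exact Equiv.sum_comp e fun i => Φ (v i) }⟩

lemma last_not_mem_map {m : ℕ} (S : Finset (Fin m)) :
    Fin.last m ∉ S.map Fin.castSuccEmb := by
  simp only [Finset.mem_map, Fin.coe_castSuccEmb]
  rintro ⟨j, _, hj⟩
  exact (Fin.castSucc_lt_last j).ne hj

lemma map_preimage_castSucc {m : ℕ} (T : Finset (Fin (m+1))) (h : Fin.last m ∉ T) :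
    (T.preimage Fin.castSucc (Fin.castSucc_injective m).injOn).map Fin.castSuccEmb = T := by
  ext i
  simp only [Finset.mem_map, Finset.mem_preimage, Fin.coe_castSuccEmb]
  constructor
  · rintro ⟨j, hj, rfl⟩; exact hj
  · intro hi
    rcases Fin.eq_castSucc_or_eq_last i with ⟨j, rfl⟩ | rfl
    · exact ⟨j, hi, rfl⟩
    · exact absurd hi h

/-- The subsets of `Fin (m+1)` split, according to whether they contain the last element,
into two copies of the subsets of `Fin m`. -/
noncomputable def finsetSuccEquiv (m : ℕ) :
    (Finset (Fin m) ⊕ Finset (Fin m)) ≃ Finset (Fin (m+1)) :=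
  Equiv.ofBijective
    (Sum.elim (fun S => S.map Fin.castSuccEmb)
      (fun S => insert (Fin.last m) (S.map Fin.castSuccEmb)))
    (by
      constructor
      · rintro (S | S) (T | T) h <;> simp only [Sum.elim_inl, Sum.elim_inr] at h
        · rw [Finset.map_injective _ h]
        · exact absurd (h ▸ Finset.mem_insert_self (Fin.last m) _)
            (last_not_mem_map S)
        · exact absurd (h ▸ Finset.mem_insert_self (Fin.last m) _)
            (last_not_mem_map T)
        · have := congrArg (Finset.erase · (Fin.last m)) h
          simp only [Finset.erase_insert (last_not_mem_map S),
            Finset.erase_insert (last_not_mem_map T)] at this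
          rw [Finset.map_injective _ this]
      · intro T
        by_cases hl : Fin.last m ∈ T
        · refine ⟨Sum.inr ((T.erase (Fin.last m)).preimage Fin.castSucc
            (Fin.castSucc_injective m).injOn), ?_⟩
          simp only [Sum.elim_inr,
            map_preimage_castSucc _ (Finset.notMem_erase _ _)]
          exact Finset.insert_erase hl
        · exact ⟨Sum.inl (T.preimage Fin.castSucc (Fin.castSucc_injective m).injOn),
            map_preimage_castSucc T hl⟩)

lemma round_pfister (m : ℕ) (a : Fin m → k) (ha : ∀ i, a i ≠ 0) :
    Round (QuadraticMap.weightedSumSquares k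
      (fun S : Finset (Fin m) => ∏ i ∈ S, -(a i))) := by
  induction m with
  | zero =>
    intro c hc hrep
    obtain ⟨v, hv⟩ := hrep
    rw [QuadraticMap.weightedSumSquares_apply] at hv
    have huniv : (Finset.univ : Finset (Finset (Fin 0))) = {∅} := by
      rw [Finset.univ_unique]; rfl
    rw [huniv, Finset.sum_singleton, Finset.prod_empty, one_smul] at hv
    have hvne : v ∅ ≠ 0 := fun h0 => hc (by rw [← hv, h0, zero_mul])
    rw [← hv]
    exact equiv_sq_smul _ hvne
  | succ m ih =>
    set w : Finset (Fin (m+1)) → k := fun S => ∏ i ∈ S, -(a i) with hw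
    set a' : Fin m → k := fun j => a j.castSucc with ha'
    set w' : Finset (Fin m) → k := fun S => ∏ i ∈ S, -(a' i) with hw'
    have hsplit := wSS_split w (finsetSuccEquiv m).symm
    have h1 : (fun S => w ((finsetSuccEquiv m).symm.symm (Sum.inl S))) = w' := by
      funext S
      simp only [Equiv.symm_symm, finsetSuccEquiv, Equiv.ofBijective_apply, Sum.elim_inl,
        hw, hw']
      exact Finset.prod_map S Fin.castSuccEmb (fun i => -(a i))
    have h2 : (fun S => w ((finsetSuccEquiv m).symm.symm (Sum.inr S)))
        = fun S => -(a (Fin.last m)) * w' S := by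
      funext S
      simp only [Equiv.symm_symm, finsetSuccEquiv, Equiv.ofBijective_apply, Sum.elim_inr,
        hw, hw']
      show ∏ i ∈ insert (Fin.last m) (S.map Fin.castSuccEmb), -(a i) = _
      rw [Finset.prod_insert (f := fun i => -(a i)) (last_not_mem_map S)]
      congr 1
      exact Finset.prod_map S Fin.castSuccEmb (fun i => -(a i))
    rw [h1, h2] at hsplit
    have hsm : (QuadraticMap.weightedSumSquares k fun S => -(a (Fin.last m)) * w' S)
        = (-(a (Fin.last m))) • QuadraticMap.weightedSumSquares k w' := by
      rw [wSS_smul]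
    rw [hsm] at hsplit
    have hround : Round ((QuadraticMap.weightedSumSquares k w').prod
        ((-(a (Fin.last m))) • QuadraticMap.weightedSumSquares k w')) :=
      Round.step (ih a' (fun j => ha j.castSucc)) (ha (Fin.last m))
    exact Round.of_equivalent hsplit hround


lemma equiv_wss_pair_hyperbolic {ι : Type} [Fintype ι] (h2 : (2:k) ≠ 0)
    (w : ι → k) (hw : ∀ i, w i ≠ 0) :
    ((QuadraticMap.weightedSumSquares k w).prod
      (QuadraticMap.weightedSumSquares k (fun i => -(w i)))).Equivalent
      (QuadraticMap.pi fun _ : ι => hyperbolicPlane k) := by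
  refine ⟨{
    toFun := fun p => fun i => (w i * (p.1 i - p.2 i), p.1 i + p.2 i)
    map_add' := fun p q => by funext i; ext <;> simp <;> ring
    map_smul' := fun t p => by funext i; ext <;> simp <;> ring
    invFun := fun f => (fun i => (2 : k)⁻¹ * ((w i)⁻¹ * (f i).1 + (f i).2),
                        fun i => (2 : k)⁻¹ * ((f i).2 - (w i)⁻¹ * (f i).1))
    left_inv := fun p => by
      refine Prod.ext ?_ ?_ <;> funext i <;>
        (show _ = _) <;> field_simp [hw i] <;> ring
    right_inv := fun f => by
      funext i
      refine Prod.ext ?_ ?_ <;> (show _ = _) <;> field_simp [hw i] <;> ring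
    map_app' := fun p => by
      simp only [QuadraticMap.pi_apply, QuadraticMap.prod_apply,
        QuadraticMap.weightedSumSquares_apply, hyperbolicPlane,
        QuadraticMap.linMulLin_apply, LinearMap.fst_apply, LinearMap.snd_apply,
        smul_eq_mul]
      rw [← Finset.sum_add_distrib]
      exact Finset.sum_congr rfl fun i _ => by ring }⟩

/-- the polar form of `q ⊥ (-γ)q` separates points, given that the polar of `q` does -/
lemma polar_P_sep {q : QuadraticForm k V} (hreg : (QuadraticMap.polarBilin q).Nondegenerate)
    {γ : k} (hγ : γ ≠ 0) {z : V × V} (hz : z ≠ 0) :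
    ∃ z' : V × V, polar (⇑(q.prod ((-γ) • q))) z z' ≠ 0 := by
  have hpolar : ∀ (x y : V × V), polar (⇑(q.prod ((-γ) • q))) x y
      = polar (⇑q) x.1 y.1 + -γ * polar (⇑q) x.2 y.2 := by
    intro x y
    simp only [polar, QuadraticMap.prod_apply, QuadraticMap.smul_apply,
      Prod.fst_add, Prod.snd_add, smul_eq_mul]
    ring
  by_cases h1 : z.1 ≠ 0
  · have : ¬ (∀ y, QuadraticMap.polarBilin q z.1 y = 0) := fun h => h1 (hreg.1 z.1 h)
    push_neg at this
    obtain ⟨y, hy⟩ := this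
    refine ⟨(y, 0), ?_⟩
    rw [hpolar]
    simpa [QuadraticMap.polar_zero_right] using hy
  · push_neg at h1
    have h2' : z.2 ≠ 0 := by
      intro h
      exact hz (Prod.ext h1 h)
    have : ¬ (∀ y, QuadraticMap.polarBilin q z.2 y = 0) := fun h => h2' (hreg.1 z.2 h)
    push_neg at this
    obtain ⟨y, hy⟩ := this
    refine ⟨(0, y), ?_⟩
    rw [hpolar]
    have hy' : polar (⇑q) z.2 y ≠ 0 := by simpa using hy
    simpa [QuadraticMap.polar_zero_right] using mul_ne_zero (neg_ne_zero.2 hγ) hy'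

/-- an isotropic form with separating polar is universal -/
lemma universal_of_isotropic {W : Type} [AddCommGroup W] [Module k W]
    (Q : QuadraticForm k W) {z : W}
    (hz0 : Q z = 0) (hsep : ∃ z', polar (⇑Q) z z' ≠ 0) (c : k) :
    ∃ x, Q x = c := by
  obtain ⟨z', hz'⟩ := hsep
  refine ⟨z' + ((c - Q z') * (polar (⇑Q) z' z)⁻¹) • z, ?_⟩
  rw [QuadraticMap.map_add (⇑Q) z' _, QuadraticMap.map_smul, QuadraticMap.polar_smul_right, hz0]
  rw [polar_comm (⇑Q) z z'] at hz'
  field_simp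
  simp only [smul_zero, add_zero, smul_eq_mul, div_mul_cancel₀ _ hz']
  ring

/-- let `q` be a regular (`n`-fold Pfister) quadratic form over `k`
(char `k ≠ 2`) representing `1`.  Then `I² ⊆ Ann_{W(k)}(q)` — i.e. the Witt class of
`⟨⟨γ,δ⟩⟩ ⊗ q` is zero (the form is hyperbolic) for all `γ, δ ∈ k^×` — if and only if for
every `γ ∈ k^×` the form `⟨⟨γ⟩⟩ ⊗ q = q ⊥ (-γ)q` is universal. -/
theorem stmt_17 (k V : Type) [Field k] (h2 : (2 : k) ≠ 0)
    [AddCommGroup V] [Module k V] [FiniteDimensional k V]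
    (q : QuadraticForm k V)
    (hreg : (QuadraticMap.polarBilin q).Nondegenerate)
    (hone : ∃ e : V, q e = 1)
    (n : ℕ) (hpf : IsPfister n q) :
    (∀ γ δ : k, γ ≠ 0 → δ ≠ 0 →
        IsHyperbolic ((q.prod ((-γ) • q)).prod (((-δ) • q).prod ((γ * δ) • q))))
      ↔ (∀ γ : k, γ ≠ 0 → ∀ c : k, c ≠ 0 → ∃ z : V × V, (q.prod ((-γ) • q)) z = c) := by
  obtain ⟨a, ha, hq⟩ := hpf
  set w : Finset (Fin n) → k := fun S => ∏ i ∈ S, -(a i) with hwdef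
  have hwne : ∀ S, w S ≠ 0 := fun S =>
    Finset.prod_ne_zero_iff.2 fun i _ => neg_ne_zero.2 (ha i)
  have hroundq : Round q := Round.of_equivalent hq (round_pfister n a ha)
  have heq : ∀ γ δ : k, ((-δ) • q).prod ((γ * δ) • q) = (-δ) • (q.prod ((-γ) • q)) := by
    intro γ δ
    rw [smul_prod_eq, smul_smul, show -δ * -γ = γ * δ by ring]
  constructor
  · -- hyperbolicity implies universality
    intro H γ hγ c hc
    set P := q.prod ((-γ) • q) with hPdef
    have roundP : Round P := Round.step hroundq hγ
    have hH := H γ c hγ hc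
    rw [heq γ c] at hH
    obtain ⟨N, ⟨f⟩⟩ := hH
    obtain ⟨e, he⟩ := hone
    have hN : N ≠ 0 := by
      rintro rfl
      have hv : f (((e, 0), (0, 0)) : (V × V) × (V × V)) = f 0 := funext fun i => i.elim0
      have h0 : (((e, 0), (0, 0)) : (V × V) × (V × V)) = 0 :=
        f.toLinearEquiv.injective hv
      have h1 : P.prod ((-c) • P) (((e, 0), (0, 0)) : (V × V) × (V × V)) = 1 := by
        simp [hPdef, QuadraticMap.prod_apply, QuadraticMap.smul_apply, he]
      rw [h0, map_zero] at h1
      exact one_ne_zero h1.symm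
    obtain ⟨N', rfl⟩ : ∃ N', N = N' + 1 := ⟨N - 1, (Nat.succ_pred_eq_of_ne_zero hN).symm⟩
    set v0 : Fin (N' + 1) → k × k := fun _ => ((1 : k), (0 : k)) with hv0
    have hv0val : (QuadraticMap.pi fun _ : Fin (N' + 1) => hyperbolicPlane k) v0 = 0 := by
      simp [QuadraticMap.pi_apply, hyperbolicPlane, hv0]
    have hv0ne : v0 ≠ 0 := by
      intro h
      have h1 := congrFun h 0
      rw [hv0] at h1
      simp at h1
    set Z := f.toLinearEquiv.symm v0 with hZdef
    have hfZ : f Z = v0 := by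
      have h1 := f.toLinearEquiv.apply_symm_apply v0
      rwa [QuadraticMap.IsometryEquiv.coe_toLinearEquiv] at h1
    have hZval : P.prod ((-c) • P) Z = 0 := by
      rw [← f.map_app Z, hfZ]
      exact hv0val
    have hZne : Z ≠ 0 := by
      intro h
      apply hv0ne
      rw [← hfZ, h, map_zero]
    have hsum : P Z.1 + -c * P Z.2 = 0 := by
      rw [← hZval]
      simp [QuadraticMap.prod_apply, QuadraticMap.smul_apply]
    by_cases hz2 : P Z.2 = 0
    · -- isotropic case
      have hz1 : P Z.1 = 0 := by
        rw [hz2, mul_zero, add_zero] at hsum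
        exact hsum
      rcases (em (Z.1 = 0)) with h1 | h1
      · have h2 : Z.2 ≠ 0 := by
          intro h
          exact hZne (Prod.ext h1 h)
        exact universal_of_isotropic P hz2 (polar_P_sep hreg hγ h2) c
      · exact universal_of_isotropic P hz1 (polar_P_sep hreg hγ h1) c
    · -- round case
      have hz1val : P Z.1 = c * P Z.2 := by linear_combination hsum
      obtain ⟨g⟩ := roundP (P Z.2) hz2 ⟨Z.2, rfl⟩
      refine ⟨g.toLinearEquiv.symm Z.1, ?_⟩
      have h1 := g.map_app (g.toLinearEquiv.symm Z.1)
      rw [QuadraticMap.smul_apply, smul_eq_mul] at h1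
      have h2 : g (g.toLinearEquiv.symm Z.1) = Z.1 := by
        have h3 := g.toLinearEquiv.apply_symm_apply Z.1
        rwa [QuadraticMap.IsometryEquiv.coe_toLinearEquiv] at h3
      rw [h2] at h1
      exact mul_left_cancel₀ hz2 (h1.symm.trans (hz1val.trans (mul_comm c _)))
  · -- universality implies hyperbolicity
    intro H γ δ hγ hδ
    rw [heq γ δ]
    set P := q.prod ((-γ) • q) with hPdef
    have roundP : Round P := Round.step hroundq hγ
    obtain ⟨z, hz⟩ := H γ hγ δ hδ
    have hQsmul : ((-γ) • q).Equivalent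
        (QuadraticMap.weightedSumSquares k fun S => -γ * w S) := by
      rw [← wSS_smul]
      exact equiv_smul (-γ) hq
    set W2 : Finset (Fin n) ⊕ Finset (Fin n) → k := Sum.elim w (fun S => -γ * w S)
      with hW2def
    have hsplit := wSS_split W2 (Equiv.refl _)
    have hP : P.Equivalent (QuadraticMap.weightedSumSquares k W2) :=
      (QuadraticMap.Equivalent.prod hq hQsmul).trans hsplit.symm
    have hW2ne : ∀ i, W2 i ≠ 0 := by
      rintro (S | S)
      · exact hwne S
      · exact mul_ne_zero (neg_ne_zero.2 hγ) (hwne S)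
    have e1 : ((-δ) • P).Equivalent ((-1 : k) • P) := by
      rw [show (-δ : k) = -1 * δ by ring, ← smul_smul]
      exact equiv_smul (-1) (roundP δ hδ ⟨z, hz⟩)
    have e2 : ((-1 : k) • P).Equivalent
        (QuadraticMap.weightedSumSquares k fun i => -(W2 i)) := by
      have h1 := equiv_smul (-1 : k) hP
      rw [wSS_smul,
        show (fun i => (-1 : k) * W2 i) = fun i => -(W2 i) from
          funext fun i => neg_one_mul _] at h1
      exact h1
    have e3 := equiv_wss_pair_hyperbolic h2 W2 hW2ne
    refine ⟨Fintype.card (Finset (Fin n) ⊕ Finset (Fin n)), ?_⟩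
    exact ((QuadraticMap.Equivalent.prod hP (e1.trans e2)).trans e3).trans
      (pi_reindex (Fintype.equivFin _).symm _)
end
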